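/- Causal recurrence rule: let g : ℝ^n × ℝ^m → ℝ^m be everywhere differentiable and i ∈ ℝ^m. Then the causal function rec_i(g) : (ℝ^n)^ω → (ℝ^m)^ω is causally differentiable everywhere, and for every σ, Δσ, the stream Δτ := D(rec_i(g))(σ)(Δσ) satisfies Δτ_0 = Jg(σ_0, i)(Δσ_0, 0) and Δτ_{k+1} = Jg(σ_{k+1}, τ_k)(Δσ_{k+1}, Δτ_k), where τ = rec_i(g)(σ). -/

import Mathlib

/-- A stream function is *causal* if initial segments of length `k+1` of the
input determine initial segments of length `k+1` of the output. -/
def Causal {A B : Type*} (f : (ℕ → A) → (ℕ → B)) : Prop :=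
  ∀ σ τ : ℕ → A, ∀ k : ℕ, (∀ i ≤ k, σ i = τ i) → ∀ i ≤ k, f σ i = f τ i

/-- Extend a finite word to a stream (padding with the first letter). -/
def extW {A : Type*} {k : ℕ} (w : Fin (k+1) → A) : ℕ → A :=
  fun n => if h : n < k+1 then w ⟨n, h⟩ else w 0

/-- The `k`-th pointwise approximant (unrolling) of a causal function. -/
def U {A B : Type*} (f : (ℕ → A) → (ℕ → B)) (k : ℕ) (w : Fin (k+1) → A) : B :=
  f (extW w) k

/-- The `k`-th stringwise approximant (truncation) of a causal function. -/
def T {A B : Type*} (f : (ℕ → A) → (ℕ → B)) (k : ℕ) (w : Fin (k+1) → A) :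
    Fin (k+1) → B := fun i => f (extW w) i

/-- The initial segment `σ_{0:k}` of a stream, as a finite word. -/
def init {A : Type*} (σ : ℕ → A) (k : ℕ) : Fin (k+1) → A := fun i => σ i

/-- A causal function is differentiable at a stream `σ` when all of its
pointwise approximants are differentiable at `σ_{0:k}`. -/
def CausalDiffAt {E F : Type*} [NormedAddCommGroup E] [NormedSpace ℝ E]
    [NormedAddCommGroup F] [NormedSpace ℝ F]
    (f : (ℕ → E) → ℕ → F) (σ : ℕ → E) : Prop :=
  ∀ k, DifferentiableAt ℝ (U f k) (init σ k)

/-- `L` is the causal derivative of `f` at `σ`: the `k`-th pointwise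
approximant of `L` is the Jacobian of `U_k(f)` at `σ_{0:k}`. -/
def IsCausalDerivAt {E F : Type*} [NormedAddCommGroup E] [NormedSpace ℝ E]
    [NormedAddCommGroup F] [NormedSpace ℝ F]
    (f : (ℕ → E) → ℕ → F) (σ : ℕ → E) (L : (ℕ → E) → ℕ → F) : Prop :=
  ∀ (Δ : ℕ → E) (k : ℕ), L Δ k = fderiv ℝ (U f k) (init σ k) (init Δ k)

/-- The causal function defined by recurrence from `g` with initial value `i`. -/
def recC {n m : ℕ} (g : (Fin n → ℝ) × (Fin m → ℝ) → Fin m → ℝ)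
    (i : Fin m → ℝ) (σ : ℕ → Fin n → ℝ) : ℕ → Fin m → ℝ
  | 0 => g (σ 0, i)
  | k+1 => g (σ (k+1), recC g i σ k)

section Aux

variable {n m : ℕ} (g : (Fin n → ℝ) × (Fin m → ℝ) → Fin m → ℝ) (i : Fin m → ℝ)

/-- Finite unrolling of the recurrence. -/
noncomputable def Fk : (k : ℕ) → (Fin (k+1) → Fin n → ℝ) → Fin m → ℝ
  | 0, w => g (w 0, i)
  | k+1, w => g (w (Fin.last (k+1)), Fk k (fun j => w j.castSucc))

lemma recC_congr (σ τ : ℕ → Fin n → ℝ) (k : ℕ) (h : ∀ j ≤ k, σ j = τ j) :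
    recC g i σ k = recC g i τ k := by
  induction k with
  | zero => simp [recC, h 0 le_rfl]
  | succ k ih =>
    simp [recC, h (k+1) le_rfl, ih (fun j hj => h j (hj.trans (Nat.le_succ k)))]

lemma U_recC (k : ℕ) (w : Fin (k+1) → Fin n → ℝ) :
    U (recC g i) k w = Fk g i k w := by
  induction k with
  | zero => simp [U, recC, Fk, extW]
  | succ k ih =>
    have h1 : recC g i (extW w) k = recC g i (extW (fun j => w j.castSucc)) k := by
      apply recC_congr
      intro j hj
      simp only [extW, Nat.lt_succ_of_le hj, Nat.lt_succ_of_le (hj.trans (Nat.le_succ k)),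
        dif_pos]
      rfl
    have h2 : extW w (k+1) = w (Fin.last (k+1)) := by
      simp only [extW, Nat.lt_succ_self, dif_pos]; rfl
    simp only [U, recC] at ih ⊢
    rw [h1, ih, h2, Fk]

/-- The linear restriction map dropping the last letter. -/
noncomputable def restr (k : ℕ) :
    (Fin (k+2) → Fin n → ℝ) →L[ℝ] (Fin (k+1) → Fin n → ℝ) :=
  ContinuousLinearMap.pi (fun j => ContinuousLinearMap.proj j.castSucc)



lemma hasFDerivAt_Fk_zero (hg : Differentiable ℝ g) (w : Fin 1 → Fin n → ℝ) :
    HasFDerivAt (Fk g i 0)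
      ((fderiv ℝ g (w 0, i)).comp
        ((ContinuousLinearMap.proj 0).prod 0)) w := by
  have h1 : HasFDerivAt (fun w : Fin 1 → Fin n → ℝ => (w 0, i))
      ((ContinuousLinearMap.proj (0 : Fin 1) :
        (Fin 1 → Fin n → ℝ) →L[ℝ] (Fin n → ℝ)).prod 0) w := by
    exact HasFDerivAt.prodMk ((ContinuousLinearMap.proj (0 : Fin 1) :
      (Fin 1 → Fin n → ℝ) →L[ℝ] (Fin n → ℝ)).hasFDerivAt) (hasFDerivAt_const i w)
  exact ((hg _).hasFDerivAt).comp w h1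

lemma diff_Fk (hg : Differentiable ℝ g) : ∀ k, Differentiable ℝ (Fk g i k) := by
  intro k
  induction k with
  | zero => exact fun w => (hasFDerivAt_Fk_zero g i hg w).differentiableAt
  | succ k ih =>
    intro w
    have h2 : HasFDerivAt
        (fun w : Fin (k+2) → Fin n → ℝ => Fk g i k (fun j => w j.castSucc))
        ((fderiv ℝ (Fk g i k) (fun j => w j.castSucc)).comp (restr k)) w := by
      exact ((ih _).hasFDerivAt).comp w ((restr k).hasFDerivAt)
    have h1 : HasFDerivAt
        (fun w : Fin (k+2) → Fin n → ℝ =>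
          (w (Fin.last (k+1)), Fk g i k (fun j => w j.castSucc)))
        ((ContinuousLinearMap.proj (Fin.last (k+1)) :
          (Fin (k+2) → Fin n → ℝ) →L[ℝ] (Fin n → ℝ)).prod
          ((fderiv ℝ (Fk g i k) (fun j => w j.castSucc)).comp (restr k))) w := by
      exact HasFDerivAt.prodMk ((ContinuousLinearMap.proj (Fin.last (k+1)) :
        (Fin (k+2) → Fin n → ℝ) →L[ℝ] (Fin n → ℝ)).hasFDerivAt) h2
    exact (((hg _).hasFDerivAt).comp w h1).differentiableAt

lemma hasFDerivAt_Fk_succ (hg : Differentiable ℝ g) (k : ℕ) (w : Fin (k+2) → Fin n → ℝ) :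
    HasFDerivAt (Fk g i (k+1))
      ((fderiv ℝ g (w (Fin.last (k+1)), Fk g i k (fun j => w j.castSucc))).comp
        ((ContinuousLinearMap.proj (Fin.last (k+1)) :
          (Fin (k+2) → Fin n → ℝ) →L[ℝ] (Fin n → ℝ)).prod
          ((fderiv ℝ (Fk g i k) (fun j => w j.castSucc)).comp (restr k)))) w := by
  have h2 : HasFDerivAt
      (fun w : Fin (k+2) → Fin n → ℝ => Fk g i k (fun j => w j.castSucc))
      ((fderiv ℝ (Fk g i k) (fun j => w j.castSucc)).comp (restr k)) w := by
    exact ((diff_Fk g i hg k _).hasFDerivAt).comp w ((restr k).hasFDerivAt)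
  have h1 : HasFDerivAt
      (fun w : Fin (k+2) → Fin n → ℝ =>
        (w (Fin.last (k+1)), Fk g i k (fun j => w j.castSucc)))
      ((ContinuousLinearMap.proj (Fin.last (k+1)) :
        (Fin (k+2) → Fin n → ℝ) →L[ℝ] (Fin n → ℝ)).prod
        ((fderiv ℝ (Fk g i k) (fun j => w j.castSucc)).comp (restr k))) w :=
    HasFDerivAt.prodMk ((ContinuousLinearMap.proj (Fin.last (k+1)) :
      (Fin (k+2) → Fin n → ℝ) →L[ℝ] (Fin n → ℝ)).hasFDerivAt) h2
  exact ((hg _).hasFDerivAt).comp w h1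

lemma fderiv_Fk_zero (hg : Differentiable ℝ g) (w Δ : Fin 1 → Fin n → ℝ) :
    fderiv ℝ (Fk g i 0) w Δ = fderiv ℝ g (w 0, i) (Δ 0, 0) := by
  rw [(hasFDerivAt_Fk_zero g i hg w).fderiv]; rfl

lemma fderiv_Fk_succ (hg : Differentiable ℝ g) (k : ℕ) (w Δ : Fin (k+2) → Fin n → ℝ) :
    fderiv ℝ (Fk g i (k+1)) w Δ =
      fderiv ℝ g (w (Fin.last (k+1)), Fk g i k (fun j => w j.castSucc))
        (Δ (Fin.last (k+1)),
         fderiv ℝ (Fk g i k) (fun j => w j.castSucc) (fun j => Δ j.castSucc)) := by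
  rw [(hasFDerivAt_Fk_succ g i hg k w).fderiv]; rfl

end Aux

/-- Causal recurrence rule. -/
theorem causal_recurrence_rule {n m : ℕ}
    (g : (Fin n → ℝ) × (Fin m → ℝ) → Fin m → ℝ) (hg : Differentiable ℝ g)
    (i : Fin m → ℝ) (σ : ℕ → Fin n → ℝ) :
    CausalDiffAt (recC g i) σ ∧
    ∀ L, IsCausalDerivAt (recC g i) σ L → ∀ Δσ : ℕ → Fin n → ℝ,
      L Δσ 0 = fderiv ℝ g (σ 0, i) (Δσ 0, 0) ∧
      ∀ k : ℕ, L Δσ (k+1) =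
        fderiv ℝ g (σ (k+1), recC g i σ k) (Δσ (k+1), L Δσ k) := by
  have hU : ∀ k, U (recC g i) k = Fk g i k := fun k => funext (U_recC g i k)
  have hFinit : ∀ k, Fk g i k (init σ k) = recC g i σ k := by
    intro k
    rw [← U_recC g i k (init σ k)]
    unfold U
    apply recC_congr
    intro j hj
    simp only [extW, Nat.lt_succ_of_le hj, dif_pos]
    rfl
  constructor
  · intro k
    rw [hU k]
    exact (diff_Fk g i hg k) _
  · intro L hL Δσ
    constructor
    · rw [hL Δσ 0, hU 0, fderiv_Fk_zero g i hg]
      rfl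
    · intro k
      rw [hL Δσ (k+1), hL Δσ k, hU (k+1), hU k, fderiv_Fk_succ g i hg k]
      have h1 : (fun j : Fin (k+1) => init σ (k+1) j.castSucc) = init σ k := rfl
      have h2 : (fun j : Fin (k+1) => init Δσ (k+1) j.castSucc) = init Δσ k := rfl
      rw [h1, h2, hFinit k]
      rfl
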